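/- Let R be a Γ-graded integral domain and ⋆ a homogeneous star operation on R. Then the map e(⋆) : F(R) → F(R) defined by A^{e(⋆)} := ⋂ { z⁻¹·(C(zA))^⋆ : 0 ≠ z ∈ (R : A) } is a (classical) star operation on R; that is, for all nonzero x ∈ K and all A, B ∈ F(R): (x)^{e(⋆)} = (x), (xA)^{e(⋆)} = x·A^{e(⋆)}, A ⊆ A^{e(⋆)}, A ⊆ B implies A^{e(⋆)} ⊆ B^{e(⋆)}, and (A^{e(⋆)})^{e(⋆)} = A^{e(⋆)}. -/

import Mathlib

open FractionalIdeal
open scoped Classical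

section Setup

variable {Γ : Type*} [AddCommMonoid Γ] [LinearOrder Γ] [IsOrderedCancelAddMonoid Γ] [DecidableEq Γ]
  {R : Type*} [CommRing R] [IsDomain R]
  (𝒜 : Γ → AddSubgroup R) [GradedRing 𝒜]
  (K : Type*) [Field K] [Algebra R K] [IsFractionRing R K]

/-- The integral ideal corresponding to a fractional ideal contained in `R`. -/
def idealOf (J : FractionalIdeal (nonZeroDivisors R) K) : Ideal R :=
  (J : Submodule R K).comap (Algebra.linearMap R K)

/-- An integral ideal is homogeneous if it contains all homogeneous components of its elements. -/
def IsHomIdeal (I : Ideal R) : Prop := ∀ f ∈ I, ∀ γ : Γ, GradedRing.proj 𝒜 γ f ∈ I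

/-- `C(I)`: the homogeneous ideal generated by the homogeneous components of elements of `I`. -/
def homC (I : Ideal R) : Ideal R :=
  Ideal.span {x | ∃ f ∈ I, ∃ γ : Γ, x = GradedRing.proj 𝒜 γ f}

/-- `C(J)` for a fractional ideal `J ⊆ R`, as a fractional ideal. -/
def Cfrac (J : FractionalIdeal (nonZeroDivisors R) K) : FractionalIdeal (nonZeroDivisors R) K :=
  ↑(homC 𝒜 (idealOf K J))

/-- A fractional ideal is homogeneous if some nonzero homogeneous `s ∈ R` multiplies it into a
homogeneous integral ideal. -/
def IsHomFrac (A : FractionalIdeal (nonZeroDivisors R) K) : Prop :=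
  ∃ s : R, s ≠ 0 ∧ SetLike.IsHomogeneousElem 𝒜 s ∧
    spanSingleton (nonZeroDivisors R) (algebraMap R K s) * A ≤ 1 ∧
    IsHomIdeal 𝒜 (idealOf K (spanSingleton (nonZeroDivisors R) (algebraMap R K s) * A))

/-- A homogeneous element of the homogeneous quotient field, viewed inside `K`. -/
def IsHomElem (x : K) : Prop :=
  ∃ a b : R, SetLike.IsHomogeneousElem 𝒜 a ∧ SetLike.IsHomogeneousElem 𝒜 b ∧ b ≠ 0 ∧
    x * algebraMap R K b = algebraMap R K a

end Setup

/-- A homogeneous star operation on the graded domain `R`. -/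
structure HomStarOp {Γ : Type*} [AddCommMonoid Γ] [LinearOrder Γ] [IsOrderedCancelAddMonoid Γ] [DecidableEq Γ]
    {R : Type*} [CommRing R] [IsDomain R] (𝒜 : Γ → AddSubgroup R) [GradedRing 𝒜]
    (K : Type*) [Field K] [Algebra R K] [IsFractionRing R K] where
  toFun : FractionalIdeal (nonZeroDivisors R) K → FractionalIdeal (nonZeroDivisors R) K
  hom : ∀ A, A ≠ 0 → IsHomFrac 𝒜 K A → IsHomFrac 𝒜 K (toFun A)
  map_span : ∀ x : K, x ≠ 0 → IsHomElem 𝒜 K x →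
    toFun (spanSingleton (nonZeroDivisors R) x) = spanSingleton (nonZeroDivisors R) x
  map_smul : ∀ x : K, x ≠ 0 → IsHomElem 𝒜 K x → ∀ A, A ≠ 0 → IsHomFrac 𝒜 K A →
    toFun (spanSingleton (nonZeroDivisors R) x * A) = spanSingleton (nonZeroDivisors R) x * toFun A
  le_star : ∀ A, A ≠ 0 → IsHomFrac 𝒜 K A → A ≤ toFun A
  mono : ∀ A B, A ≠ 0 → B ≠ 0 → IsHomFrac 𝒜 K A → IsHomFrac 𝒜 K B → A ≤ B → toFun A ≤ toFun B
  idem : ∀ A, A ≠ 0 → IsHomFrac 𝒜 K A → toFun (toFun A) = toFun A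

/-- A classical star operation on the domain `R`. -/
structure StarOp (R : Type*) [CommRing R] [IsDomain R]
    (K : Type*) [Field K] [Algebra R K] [IsFractionRing R K] where
  toFun : FractionalIdeal (nonZeroDivisors R) K → FractionalIdeal (nonZeroDivisors R) K
  map_span : ∀ x : K, x ≠ 0 →
    toFun (spanSingleton (nonZeroDivisors R) x) = spanSingleton (nonZeroDivisors R) x
  map_smul : ∀ x : K, x ≠ 0 → ∀ A, A ≠ 0 →
    toFun (spanSingleton (nonZeroDivisors R) x * A) = spanSingleton (nonZeroDivisors R) x * toFun A
  le_star : ∀ A, A ≠ 0 → A ≤ toFun A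
  mono : ∀ A B, A ≠ 0 → B ≠ 0 → A ≤ B → toFun A ≤ toFun B
  idem : ∀ A, A ≠ 0 → toFun (toFun A) = toFun A

section EStar

variable {Γ : Type*} [AddCommMonoid Γ] [LinearOrder Γ] [IsOrderedCancelAddMonoid Γ] [DecidableEq Γ]
  {R : Type*} [CommRing R] [IsDomain R]
  (𝒜 : Γ → AddSubgroup R) [GradedRing 𝒜]
  (K : Type*) [Field K] [Algebra R K] [IsFractionRing R K]

/-- The submodule `⋂ { z⁻¹ (C(zA))^⋆ : 0 ≠ z ∈ (R : A) }`. -/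
def eStarSub (s : HomStarOp 𝒜 K) (A : FractionalIdeal (nonZeroDivisors R) K) : Submodule R K :=
  ⨅ z ∈ {z : K | z ≠ 0 ∧ spanSingleton (nonZeroDivisors R) z * A ≤ 1},
    ↑(spanSingleton (nonZeroDivisors R) z⁻¹ *
      s.toFun (Cfrac 𝒜 K (spanSingleton (nonZeroDivisors R) z * A)))

/-- The extension `e(⋆)` of a homogeneous star operation `⋆`,
`A^{e(⋆)} := ⋂ { z⁻¹ (C(zA))^⋆ : 0 ≠ z ∈ (R : A) }` (which is a fractional ideal whenever
`A` is a nonzero fractional ideal). -/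
noncomputable def eStar (s : HomStarOp 𝒜 K) (A : FractionalIdeal (nonZeroDivisors R) K) :
    FractionalIdeal (nonZeroDivisors R) K :=
  if h : IsFractional (nonZeroDivisors R) (eStarSub 𝒜 K s A) then ⟨_, h⟩ else 0

end EStar




set_option linter.unusedSectionVars false

section FracLayer

section FracLayer
variable {Γ : Type*} [AddCommMonoid Γ] [LinearOrder Γ] [IsOrderedCancelAddMonoid Γ] [DecidableEq Γ]
  {R : Type*} [CommRing R] [IsDomain R]
  (𝒜 : Γ → AddSubgroup R) [GradedRing 𝒜]
  (K : Type*) [Field K] [Algebra R K] [IsFractionRing R K]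

lemma my_alg_inj : Function.Injective (algebraMap R K) := IsFractionRing.injective R K

lemma idealOf_coeIdeal (I : Ideal R) : idealOf K (I : FractionalIdeal (nonZeroDivisors R) K) = I := by
  unfold idealOf
  rw [coe_coeIdeal, IsLocalization.coeSubmodule, Submodule.comap_map_eq_of_injective]
  intro a b h
  exact my_alg_inj K h

lemma coeIdeal_idealOf {J : FractionalIdeal (nonZeroDivisors R) K} (hJ : J ≤ 1) :
    ((idealOf K J : Ideal R) : FractionalIdeal (nonZeroDivisors R) K) = J := by
  obtain ⟨I, rfl⟩ := (le_one_iff_exists_coeIdeal).mp hJ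
  rw [idealOf_coeIdeal]

lemma proj_shift {t f : R} {δ : Γ} (ht : t ∈ 𝒜 δ) (γ : Γ) :
    GradedRing.proj 𝒜 (δ + γ) (t * f) = t * GradedRing.proj 𝒜 γ f := by
  letI : AddLeftCancelMonoid Γ := { ‹AddCommMonoid Γ› with add_left_cancel := fun a b c h => add_left_cancel h }
  rw [GradedRing.proj_apply, GradedRing.proj_apply,
    DirectSum.coe_decompose_mul_add_of_left_mem 𝒜 ht]

lemma my_mul_mono {I J J' : FractionalIdeal (nonZeroDivisors R) K} (h : J ≤ J') :
    I * J ≤ I * J' :=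
  mul_le.mpr fun i hi j hj => mul_mem_mul hi (h hj)

lemma sp_cancel {x : K} (hx : x ≠ 0) (A : FractionalIdeal (nonZeroDivisors R) K) :
    spanSingleton (nonZeroDivisors R) x⁻¹ * (spanSingleton (nonZeroDivisors R) x * A) = A := by
  rw [← mul_assoc, spanSingleton_mul_spanSingleton, inv_mul_cancel₀ hx, spanSingleton_one, one_mul]

lemma sp_mul_ne_zero {x : K} (hx : x ≠ 0) {A : FractionalIdeal (nonZeroDivisors R) K} (hA : A ≠ 0) :
    spanSingleton (nonZeroDivisors R) x * A ≠ 0 := by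
  intro h
  apply hA
  have := congrArg (spanSingleton (nonZeroDivisors R) x⁻¹ * ·) h
  simpa [sp_cancel K hx] using this

lemma le_inv_mul_iff {x : K} (hx : x ≠ 0) {A B : FractionalIdeal (nonZeroDivisors R) K} :
    A ≤ spanSingleton (nonZeroDivisors R) x⁻¹ * B ↔ spanSingleton (nonZeroDivisors R) x * A ≤ B := by
  constructor
  · intro h
    have := my_mul_mono K (I := spanSingleton (nonZeroDivisors R) x) h
    rwa [← mul_assoc, spanSingleton_mul_spanSingleton, mul_inv_cancel₀ hx, spanSingleton_one,
      one_mul] at this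
  · intro h
    have := my_mul_mono K (I := spanSingleton (nonZeroDivisors R) x⁻¹) h
    rwa [sp_cancel K hx] at this


lemma my_sum_decompose (f : R) :
    ∑ γ ∈ (DirectSum.decompose 𝒜 f).support, GradedRing.proj 𝒜 γ f = f := by
  simpa [GradedRing.proj_apply] using DirectSum.sum_support_decompose 𝒜 f

lemma le_homC (I : Ideal R) : I ≤ homC 𝒜 I := by
  intro f hf
  rw [← my_sum_decompose 𝒜 f]
  exact Ideal.sum_mem _ fun γ _ => Ideal.subset_span ⟨f, hf, γ, rfl⟩

lemma homC_mono {I I' : Ideal R} (h : I ≤ I') : homC 𝒜 I ≤ homC 𝒜 I' :=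
  Ideal.span_mono fun x ⟨f, hf, γ, hγ⟩ => ⟨f, h hf, γ, hγ⟩

lemma proj_mul_single {x : R} {d : Γ} (hx : x ∈ 𝒜 d) (r : R) (γ : Γ) :
    GradedRing.proj 𝒜 γ (r * x) ∈ Ideal.span {x} := by
  rw [← my_sum_decompose 𝒜 r, Finset.sum_mul, map_sum]
  refine Ideal.sum_mem _ fun j _ => ?_
  have hm : GradedRing.proj 𝒜 j r * x ∈ 𝒜 (j + d) := by
    rw [GradedRing.proj_apply]
    exact SetLike.mul_mem_graded (SetLike.coe_mem _) hx
  rcases eq_or_ne γ (j + d) with h | h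
  · rw [GradedRing.proj_apply, h, DirectSum.decompose_of_mem_same 𝒜 hm]
    exact Ideal.mul_mem_left _ _ (Ideal.subset_span rfl)
  · rw [GradedRing.proj_apply, DirectSum.decompose_of_mem_ne 𝒜 hm (Ne.symm h)]
    exact Ideal.zero_mem _

lemma isHomIdeal_span (S : Set R) (hS : ∀ x ∈ S, SetLike.IsHomogeneousElem 𝒜 x) :
    IsHomIdeal 𝒜 (Ideal.span S) := by
  intro f hf
  induction hf using Submodule.span_induction with
  | mem x hx =>
      intro γ
      obtain ⟨d, hd⟩ := hS x hx
      rcases eq_or_ne γ d with h | h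
      · rw [GradedRing.proj_apply, h, DirectSum.decompose_of_mem_same 𝒜 hd]
        exact Ideal.subset_span hx
      · rw [GradedRing.proj_apply, DirectSum.decompose_of_mem_ne 𝒜 hd (Ne.symm h)]
        exact Ideal.zero_mem _
  | zero => intro γ; simpa using Ideal.zero_mem (Ideal.span S)
  | add x y hx hy ihx ihy =>
      intro γ
      simpa [_root_.map_add] using Ideal.add_mem _ (ihx γ) (ihy γ)
  | smul r x hx ih =>
      intro γ
      rw [smul_eq_mul, ← my_sum_decompose 𝒜 x, Finset.mul_sum, map_sum]
      refine Ideal.sum_mem _ fun j _ => ?_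
      have h1 : GradedRing.proj 𝒜 γ (r * GradedRing.proj 𝒜 j x) ∈
          Ideal.span {GradedRing.proj 𝒜 j x} :=
        proj_mul_single 𝒜 (by rw [GradedRing.proj_apply]; exact SetLike.coe_mem _) r γ
      have h2 : Ideal.span {GradedRing.proj 𝒜 j x} ≤ Ideal.span S := by
        rw [Ideal.span_singleton_le_iff_mem]
        exact ih j
      exact h2 h1

lemma isHomIdeal_homC (I : Ideal R) : IsHomIdeal 𝒜 (homC 𝒜 I) :=
  isHomIdeal_span 𝒜 _ fun x ⟨f, _, γ, hγ⟩ =>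
    ⟨γ, by rw [hγ, GradedRing.proj_apply]; exact SetLike.coe_mem _⟩

-- Cfrac layer
lemma Cfrac_le_one (J : FractionalIdeal (nonZeroDivisors R) K) : Cfrac 𝒜 K J ≤ 1 :=
  coeIdeal_le_one

lemma le_Cfrac {J : FractionalIdeal (nonZeroDivisors R) K} (hJ : J ≤ 1) : J ≤ Cfrac 𝒜 K J := by
  conv_lhs => rw [← coeIdeal_idealOf K hJ]
  exact (coeIdeal_le_coeIdeal K).mpr (le_homC 𝒜 _)

lemma Cfrac_mono {J J' : FractionalIdeal (nonZeroDivisors R) K} (h : J ≤ J') :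
    Cfrac 𝒜 K J ≤ Cfrac 𝒜 K J' :=
  (coeIdeal_le_coeIdeal K).mpr (homC_mono 𝒜 (Submodule.comap_mono (coe_le_coe.mpr h)))

lemma Cfrac_ne_zero {J : FractionalIdeal (nonZeroDivisors R) K} (hJ : J ≠ 0) (hJ1 : J ≤ 1) :
    Cfrac 𝒜 K J ≠ 0 := by
  intro h
  exact hJ (le_antisymm (h ▸ le_Cfrac 𝒜 K hJ1) (zero_le _))

lemma sp_one_alg : spanSingleton (nonZeroDivisors R)
    (algebraMap R K (1 : R)) = 1 := by rw [_root_.map_one, spanSingleton_one]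

lemma idealOf_one : idealOf K (1 : FractionalIdeal (nonZeroDivisors R) K) = ⊤ := by
  rw [← coeIdeal_top, idealOf_coeIdeal]

lemma isHomFrac_Cfrac (J : FractionalIdeal (nonZeroDivisors R) K) :
    IsHomFrac 𝒜 K (Cfrac 𝒜 K J) := by
  refine ⟨1, one_ne_zero, SetLike.isHomogeneousElem_one 𝒜, ?_, ?_⟩
  · rw [sp_one_alg, one_mul]; exact Cfrac_le_one 𝒜 K J
  · rw [sp_one_alg, one_mul]
    show IsHomIdeal 𝒜 (idealOf K ((homC 𝒜 (idealOf K J) : Ideal R) : FractionalIdeal (nonZeroDivisors R) K))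
    rw [idealOf_coeIdeal]
    exact isHomIdeal_homC 𝒜 _

lemma isHomFrac_one : IsHomFrac 𝒜 K (1 : FractionalIdeal (nonZeroDivisors R) K) := by
  refine ⟨1, one_ne_zero, SetLike.isHomogeneousElem_one 𝒜, ?_, ?_⟩
  · rw [sp_one_alg, one_mul]
  · rw [sp_one_alg, one_mul, idealOf_one]
    intro f _ γ; trivial

lemma isHomElem_one : IsHomElem 𝒜 K (1 : K) :=
  ⟨1, 1, SetLike.isHomogeneousElem_one 𝒜, SetLike.isHomogeneousElem_one 𝒜, one_ne_zero, by rw [one_mul]⟩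

lemma Cfrac_one : Cfrac 𝒜 K (1 : FractionalIdeal (nonZeroDivisors R) K) = 1 :=
  le_antisymm (Cfrac_le_one 𝒜 K 1) (le_Cfrac 𝒜 K le_rfl)

lemma Cfrac_le_self {J : FractionalIdeal (nonZeroDivisors R) K} (hJ1 : J ≤ 1)
    (h : IsHomIdeal 𝒜 (idealOf K J)) : Cfrac 𝒜 K J ≤ J := by
  conv_rhs => rw [← coeIdeal_idealOf K hJ1]
  refine (coeIdeal_le_coeIdeal K).mpr (Ideal.span_le.mpr ?_)
  rintro x ⟨f, hf, γ, rfl⟩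
  exact h f hf γ

lemma homIdeal_of_homFrac {J : FractionalIdeal (nonZeroDivisors R) K} (hJ1 : J ≤ 1)
    (h : IsHomFrac 𝒜 K J) : IsHomIdeal 𝒜 (idealOf K J) := by
  obtain ⟨t, ht0, ⟨δ, htδ⟩, htle, hthom⟩ := h
  obtain ⟨I, rfl⟩ := (le_one_iff_exists_coeIdeal).mp hJ1
  rw [idealOf_coeIdeal]
  have key : idealOf K (spanSingleton (nonZeroDivisors R) (algebraMap R K t) *
      (I : FractionalIdeal (nonZeroDivisors R) K)) = Ideal.span {t} * I := by
    rw [← coeIdeal_span_singleton, ← coeIdeal_mul, idealOf_coeIdeal]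
  rw [key] at hthom
  intro f hf γ
  have h1 : t * f ∈ Ideal.span {t} * I :=
    Ideal.mul_mem_mul (Ideal.mem_span_singleton_self t) hf
  have h2 := hthom _ h1 (δ + γ)
  rw [proj_shift 𝒜 htδ] at h2
  obtain ⟨z, hz, hzf⟩ := Ideal.mem_span_singleton_mul.mp h2
  rwa [← mul_left_cancel₀ ht0 hzf]

end FracLayer

section EStarLemmas
variable {Γ : Type*} [AddCommMonoid Γ] [LinearOrder Γ] [IsOrderedCancelAddMonoid Γ] [DecidableEq Γ]
  {R : Type*} [CommRing R] [IsDomain R]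
  (𝒜 : Γ → AddSubgroup R) [GradedRing 𝒜]
  (K : Type*) [Field K] [Algebra R K] [IsFractionRing R K]
  (s : HomStarOp 𝒜 K)


/-- The denominator set. -/
def SA (A : FractionalIdeal (nonZeroDivisors R) K) : Set K :=
  {z : K | z ≠ 0 ∧ spanSingleton (nonZeroDivisors R) z * A ≤ 1}

/-- The term in the intersection. -/
noncomputable def Tterm (z : K) (A : FractionalIdeal (nonZeroDivisors R) K) :
    FractionalIdeal (nonZeroDivisors R) K :=
  spanSingleton (nonZeroDivisors R) z⁻¹ *
    s.toFun (Cfrac 𝒜 K (spanSingleton (nonZeroDivisors R) z * A))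

lemma eStarSub_eq (A : FractionalIdeal (nonZeroDivisors R) K) :
    eStarSub 𝒜 K s A = ⨅ z ∈ SA K A, ↑(Tterm 𝒜 K s z A) := rfl

lemma exists_SA {A : FractionalIdeal (nonZeroDivisors R) K} (hA : A ≠ 0) :
    ∃ z, z ∈ SA K A := by
  obtain ⟨a, haS, ha⟩ := A.isFractional
  refine ⟨algebraMap R K a, ?_, ?_⟩
  · simpa using fun h => mem_nonZeroDivisors_iff_ne_zero.mp haS (my_alg_inj K (by simpa using h))
  · rw [mul_le]
    intro i hi j hj
    obtain ⟨r, rfl⟩ := (mem_spanSingleton _).mp hi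
    obtain ⟨c, hc⟩ := ha j hj
    rw [smul_mul_assoc, mem_one_iff]
    refine ⟨r * c, ?_⟩
    calc algebraMap R K (r * c) = r • algebraMap R K c := by
          rw [_root_.map_mul, Algebra.smul_def]
      _ = r • (a • j) := by rw [hc]
      _ = r • (algebraMap R K a * j) := by rw [Algebra.smul_def a j]

lemma Tterm_ne (z : K) (A : FractionalIdeal (nonZeroDivisors R) K) : True := trivial

-- facts for z ∈ SA A, A ≠ 0
variable {A : FractionalIdeal (nonZeroDivisors R) K}

lemma le_Tterm (hA : A ≠ 0) {z : K} (hz : z ∈ SA K A) : A ≤ Tterm 𝒜 K s z A := by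
  obtain ⟨hz0, hz1⟩ := hz
  rw [Tterm, le_inv_mul_iff K hz0]
  calc spanSingleton (nonZeroDivisors R) z * A
      ≤ Cfrac 𝒜 K (spanSingleton (nonZeroDivisors R) z * A) := le_Cfrac 𝒜 K hz1
    _ ≤ _ := s.le_star _ (Cfrac_ne_zero 𝒜 K (sp_mul_ne_zero K hz0 hA) hz1) (isHomFrac_Cfrac 𝒜 K _)

lemma eStarSub_fractional (hA : A ≠ 0) : IsFractional (nonZeroDivisors R) (eStarSub 𝒜 K s A) := by
  obtain ⟨z, hz⟩ := exists_SA K hA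
  refine isFractional_of_le (J := Tterm 𝒜 K s z A) ?_
  rw [eStarSub_eq]
  exact iInf₂_le z hz

lemma coe_eStar (hA : A ≠ 0) : (eStar 𝒜 K s A : Submodule R K) = eStarSub 𝒜 K s A := by
  have h := eStarSub_fractional 𝒜 K s hA
  unfold eStar
  exact congrArg (fun I : FractionalIdeal (nonZeroDivisors R) K => (I : Submodule R K)) (dif_pos h)

lemma le_eStar (hA : A ≠ 0) : A ≤ eStar 𝒜 K s A := by
  rw [← coe_le_coe, coe_eStar 𝒜 K s hA, eStarSub_eq]
  exact le_iInf₂ fun z hz => coe_le_coe.mpr (le_Tterm 𝒜 K s hA hz)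

lemma eStar_ne_zero (hA : A ≠ 0) : eStar 𝒜 K s A ≠ 0 := by
  intro h
  exact hA (le_antisymm (h ▸ le_eStar 𝒜 K s hA) (zero_le _))

lemma starop_one : s.toFun 1 = 1 := by
  rw [← spanSingleton_one (S := nonZeroDivisors R) (P := K)]
  exact s.map_span 1 one_ne_zero (isHomElem_one 𝒜 K)

lemma star_le_one {B : FractionalIdeal (nonZeroDivisors R) K} (hB0 : B ≠ 0)
    (hB : IsHomFrac 𝒜 K B) (hB1 : B ≤ 1) : s.toFun B ≤ 1 := by
  have := s.mono B 1 hB0 one_ne_zero hB (isHomFrac_one 𝒜 K) hB1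
  rwa [starop_one] at this

end EStarLemmas

section Main

variable {Γ : Type*} [AddCommMonoid Γ] [LinearOrder Γ] [IsOrderedCancelAddMonoid Γ] [DecidableEq Γ]
  {R : Type*} [CommRing R] [IsDomain R]
  (𝒜 : Γ → AddSubgroup R) [GradedRing 𝒜]
  (K : Type*) [Field K] [Algebra R K] [IsFractionRing R K]
  (s : HomStarOp 𝒜 K)

lemma eStar_spanSingleton {x : K} (hx : x ≠ 0) :
    eStar 𝒜 K s (spanSingleton (nonZeroDivisors R) x) = spanSingleton (nonZeroDivisors R) x := by
  have hsp : spanSingleton (nonZeroDivisors R) x ≠ 0 := spanSingleton_ne_zero_iff.mpr hx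
  refine le_antisymm ?_ (le_eStar 𝒜 K s hsp)
  rw [← coe_le_coe, coe_eStar 𝒜 K s hsp, eStarSub_eq]
  have hmem : x⁻¹ ∈ SA K (spanSingleton (nonZeroDivisors R) x) :=
    ⟨inv_ne_zero hx, by
      rw [spanSingleton_mul_spanSingleton, inv_mul_cancel₀ hx, spanSingleton_one]⟩
  refine le_trans (iInf₂_le x⁻¹ hmem) (coe_le_coe.mpr ?_)
  rw [Tterm, spanSingleton_mul_spanSingleton, inv_mul_cancel₀ hx, spanSingleton_one, Cfrac_one,
    starop_one, inv_inv, mul_one]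

lemma eStar_mono {A B : FractionalIdeal (nonZeroDivisors R) K} (hA : A ≠ 0) (hB : B ≠ 0)
    (hAB : A ≤ B) : eStar 𝒜 K s A ≤ eStar 𝒜 K s B := by
  rw [← coe_le_coe, coe_eStar 𝒜 K s hA, coe_eStar 𝒜 K s hB, eStarSub_eq, eStarSub_eq]
  refine le_iInf₂ fun z hz => ?_
  have hzA : z ∈ SA K A := ⟨hz.1, le_trans (my_mul_mono K hAB) hz.2⟩
  refine le_trans (iInf₂_le z hzA) (coe_le_coe.mpr ?_)
  exact my_mul_mono K (s.mono _ _
    (Cfrac_ne_zero 𝒜 K (sp_mul_ne_zero K hz.1 hA) hzA.2)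
    (Cfrac_ne_zero 𝒜 K (sp_mul_ne_zero K hz.1 hB) hz.2)
    (isHomFrac_Cfrac 𝒜 K _) (isHomFrac_Cfrac 𝒜 K _)
    (Cfrac_mono 𝒜 K (my_mul_mono K hAB)))

lemma mem_spanx_mul {x : K} (hx : x ≠ 0) (M : Submodule R K) (y : K) :
    y ∈ Submodule.span R {x} * M ↔ x⁻¹ * y ∈ M := by
  rw [Submodule.mem_span_singleton_mul]
  constructor
  · rintro ⟨z, hz, rfl⟩; rwa [inv_mul_cancel_left₀ hx]
  · intro h; exact ⟨x⁻¹ * y, h, by rw [mul_inv_cancel_left₀ hx]⟩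

lemma spanx_mul_iInf {ι : Sort*} {x : K} (hx : x ≠ 0) (M : ι → Submodule R K) :
    Submodule.span R {x} * (⨅ i, M i) = ⨅ i, Submodule.span R {x} * M i := by
  ext y
  simp [mem_spanx_mul K hx, Submodule.mem_iInf]

lemma Tterm_smul {x w : K} (hx : x ≠ 0) (hw : w ≠ 0) (A : FractionalIdeal (nonZeroDivisors R) K) :
    Tterm 𝒜 K s w (spanSingleton (nonZeroDivisors R) x * A) =
      spanSingleton (nonZeroDivisors R) x * Tterm 𝒜 K s (w * x) A := by
  rw [Tterm, Tterm, ← mul_assoc (spanSingleton (nonZeroDivisors R) w),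
    spanSingleton_mul_spanSingleton, ← mul_assoc, spanSingleton_mul_spanSingleton]
  congr 2
  field_simp

lemma eStar_smul {x : K} (hx : x ≠ 0) {A : FractionalIdeal (nonZeroDivisors R) K} (hA : A ≠ 0) :
    eStar 𝒜 K s (spanSingleton (nonZeroDivisors R) x * A) =
      spanSingleton (nonZeroDivisors R) x * eStar 𝒜 K s A := by
  have hxA : spanSingleton (nonZeroDivisors R) x * A ≠ 0 := sp_mul_ne_zero K hx hA
  apply coeToSubmodule_injective
  show (eStar 𝒜 K s (spanSingleton (nonZeroDivisors R) x * A) : Submodule R K) =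
    ((spanSingleton (nonZeroDivisors R) x * eStar 𝒜 K s A :
      FractionalIdeal (nonZeroDivisors R) K) : Submodule R K)
  rw [coe_eStar 𝒜 K s hxA, coe_mul, coe_eStar 𝒜 K s hA, coe_spanSingleton, eStarSub_eq,
    eStarSub_eq, spanx_mul_iInf K hx]
  have hrw : ∀ z : K, Submodule.span R {x} *
      (⨅ _ : z ∈ SA K A, ((Tterm 𝒜 K s z A : FractionalIdeal (nonZeroDivisors R) K) : Submodule R K)) =
      ⨅ _ : z ∈ SA K A, Submodule.span R {x} * ((Tterm 𝒜 K s z A :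
        FractionalIdeal (nonZeroDivisors R) K) : Submodule R K) := fun z => spanx_mul_iInf K hx _
  simp_rw [hrw]
  have hcoe : ∀ z : K, Submodule.span R {x} * ((Tterm 𝒜 K s z A :
      FractionalIdeal (nonZeroDivisors R) K) : Submodule R K) =
      ((spanSingleton (nonZeroDivisors R) x * Tterm 𝒜 K s z A :
        FractionalIdeal (nonZeroDivisors R) K) : Submodule R K) := fun z => by
    rw [coe_mul, coe_spanSingleton]
  simp_rw [hcoe]
  refine le_antisymm (le_iInf₂ fun z hz => ?_) (le_iInf₂ fun w hw => ?_)
  · -- z ∈ SA A : use w := z * x⁻¹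
    have hmem : z * x⁻¹ ∈ SA K (spanSingleton (nonZeroDivisors R) x * A) := by
      refine ⟨mul_ne_zero hz.1 (inv_ne_zero hx), ?_⟩
      rw [← mul_assoc, spanSingleton_mul_spanSingleton, mul_assoc, inv_mul_cancel₀ hx, mul_one]
      exact hz.2
    refine le_trans (iInf₂_le (z * x⁻¹) hmem) (le_of_eq ?_)
    rw [Tterm_smul 𝒜 K s hx hmem.1, inv_mul_cancel_right₀ hx]
  · -- w ∈ SA (xA) : use z := w * x
    have hmem : w * x ∈ SA K A := by
      refine ⟨mul_ne_zero hw.1 hx, ?_⟩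
      rw [← spanSingleton_mul_spanSingleton, mul_assoc]
      exact hw.2
    refine le_trans (iInf₂_le (w * x) hmem) (le_of_eq ?_)
    rw [Tterm_smul 𝒜 K s hx hw.1]

lemma eStar_idem {A : FractionalIdeal (nonZeroDivisors R) K} (hA : A ≠ 0) :
    eStar 𝒜 K s (eStar 𝒜 K s A) = eStar 𝒜 K s A := by
  have hA' := eStar_ne_zero 𝒜 K s hA
  refine le_antisymm ?_ (le_eStar 𝒜 K s hA')
  rw [← coe_le_coe, coe_eStar 𝒜 K s hA', coe_eStar 𝒜 K s hA, eStarSub_eq, eStarSub_eq]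
  refine le_iInf₂ fun z hz => ?_
  obtain ⟨hz0, hz1⟩ := hz
  set B := s.toFun (Cfrac 𝒜 K (spanSingleton (nonZeroDivisors R) z * A)) with hBdef
  have hCz0 : Cfrac 𝒜 K (spanSingleton (nonZeroDivisors R) z * A) ≠ 0 :=
    Cfrac_ne_zero 𝒜 K (sp_mul_ne_zero K hz0 hA) hz1
  have hChom := isHomFrac_Cfrac 𝒜 K (spanSingleton (nonZeroDivisors R) z * A)
  have hB0 : B ≠ 0 := fun h => hCz0 (le_antisymm (h ▸ s.le_star _ hCz0 hChom) (zero_le _))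
  have hBhom : IsHomFrac 𝒜 K B := s.hom _ hCz0 hChom
  have hB1 : B ≤ 1 := star_le_one 𝒜 K s hCz0 hChom (Cfrac_le_one 𝒜 K _)
  have hstarA_le : eStar 𝒜 K s A ≤ Tterm 𝒜 K s z A := by
    rw [← coe_le_coe, coe_eStar 𝒜 K s hA, eStarSub_eq]
    exact iInf₂_le z ⟨hz0, hz1⟩
  have hzA' : spanSingleton (nonZeroDivisors R) z * eStar 𝒜 K s A ≤ B :=
    (le_inv_mul_iff K hz0).mp hstarA_le
  have hzmem : z ∈ SA K (eStar 𝒜 K s A) := ⟨hz0, hzA'.trans hB1⟩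
  refine le_trans (iInf₂_le z hzmem) (coe_le_coe.mpr (my_mul_mono K ?_))
  have h1 : Cfrac 𝒜 K (spanSingleton (nonZeroDivisors R) z * eStar 𝒜 K s A) ≤ B :=
    le_trans (Cfrac_mono 𝒜 K hzA')
      (Cfrac_le_self 𝒜 K hB1 (homIdeal_of_homFrac 𝒜 K hB1 hBhom))
  have h2 := s.mono _ _
    (Cfrac_ne_zero 𝒜 K (sp_mul_ne_zero K hz0 hA') (hzA'.trans hB1)) hB0
    (isHomFrac_Cfrac 𝒜 K _) hBhom h1
  rwa [hBdef, s.idem _ hCz0 hChom] at h2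

end Main

/-- `e(⋆)` is a classical star operation on `R`. -/
theorem stmt_1
    {Γ : Type*} [AddCommMonoid Γ] [LinearOrder Γ] [IsOrderedCancelAddMonoid Γ] [DecidableEq Γ]
    {R : Type*} [CommRing R] [IsDomain R]
    (𝒜 : Γ → AddSubgroup R) [GradedRing 𝒜]
    (K : Type*) [Field K] [Algebra R K] [IsFractionRing R K]
    (s : HomStarOp 𝒜 K) :
    (∀ x : K, x ≠ 0 →
      eStar 𝒜 K s (spanSingleton (nonZeroDivisors R) x) = spanSingleton (nonZeroDivisors R) x) ∧
    (∀ x : K, x ≠ 0 → ∀ A : FractionalIdeal (nonZeroDivisors R) K, A ≠ 0 →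
      eStar 𝒜 K s (spanSingleton (nonZeroDivisors R) x * A) =
        spanSingleton (nonZeroDivisors R) x * eStar 𝒜 K s A) ∧
    (∀ A : FractionalIdeal (nonZeroDivisors R) K, A ≠ 0 → A ≤ eStar 𝒜 K s A) ∧
    (∀ A B : FractionalIdeal (nonZeroDivisors R) K, A ≠ 0 → B ≠ 0 → A ≤ B →
      eStar 𝒜 K s A ≤ eStar 𝒜 K s B) ∧
    (∀ A : FractionalIdeal (nonZeroDivisors R) K, A ≠ 0 →
      eStar 𝒜 K s (eStar 𝒜 K s A) = eStar 𝒜 K s A) := by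
  exact ⟨fun x hx => eStar_spanSingleton 𝒜 K s hx,
    fun x hx A hA => eStar_smul 𝒜 K s hx hA,
    fun A hA => le_eStar 𝒜 K s hA,
    fun A B hA hB h => eStar_mono 𝒜 K s hA hB h,
    fun A hA => eStar_idem 𝒜 K s hA⟩
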